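/- For each n ≥ 1 and all real x, the n-th derivative of arctan at x equals (n-1)! · q_{n-1}(x) / (1 + x²)^n. -/

import Mathlib

open Finset Polynomial Real Complex

noncomputable def q (n : ℕ) (x : ℝ) : ℝ :=
  (-1 : ℝ)^n * ∑ k ∈ (Finset.range (n+1)).filter (fun k => Even k),
    ((n+1).choose (k+1) : ℝ) * (-1 : ℝ)^(k/2) * x^(n-k)

noncomputable def Gc (m : ℕ) (z : ℂ) : ℂ :=
  (-1)^m * m.factorial * ((z - I)^(-(m+1:ℤ)) - (z + I)^(-(m+1:ℤ))) / (2*I)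

lemma sub_I_ne (x : ℝ) : (x:ℂ) - I ≠ 0 := by
  intro h
  have := congrArg Complex.im h
  simp at this

lemma add_I_ne (x : ℝ) : (x:ℂ) + I ≠ 0 := by
  intro h
  have := congrArg Complex.im h
  simp at this

lemma Gc_hasDerivAt (m : ℕ) (x : ℝ) : HasDerivAt (Gc m) (Gc (m+1) (x:ℂ)) (x:ℂ) := by
  have h1 : HasDerivAt (fun z : ℂ => (z - I)^(-(m+1:ℤ)))
      ((-(m+1:ℤ)) * ((x:ℂ) - I)^(-(m+1:ℤ)-1) * 1) (x:ℂ) := by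
    simpa [Function.comp_def] using (hasDerivAt_zpow (-(m+1:ℤ)) _ (Or.inl (sub_I_ne x))).comp (x:ℂ)
      ((hasDerivAt_id _).sub_const I)
  have h2 : HasDerivAt (fun z : ℂ => (z + I)^(-(m+1:ℤ)))
      ((-(m+1:ℤ)) * ((x:ℂ) + I)^(-(m+1:ℤ)-1) * 1) (x:ℂ) := by
    simpa [Function.comp_def] using (hasDerivAt_zpow (-(m+1:ℤ)) _ (Or.inl (add_I_ne x))).comp (x:ℂ)
      ((hasDerivAt_id _).add_const I)
  have h := (((h1.sub h2).const_mul ((-1:ℂ)^m * m.factorial)).div_const (2*I))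
  refine h.congr_deriv ?_
  have e1 : (-(m+1:ℤ)-1) = -((m+1:ℕ)+1:ℤ) := by push_cast; ring
  unfold Gc
  rw [e1]
  push_cast [Nat.factorial_succ]
  ring

lemma Ipow1 (t : ℕ) : (I:ℂ)^(2*t+1) = (-1)^t * I := by
  rw [pow_succ, pow_mul, I_sq]

lemma Ipow2 (t : ℕ) : (-I:ℂ)^(2*t+1) = -((-1:ℂ)^t * I) := by
  rw [Odd.neg_pow ⟨t, by ring⟩, Ipow1]

lemma key (m : ℕ) (y : ℂ) :
    (∑ k ∈ (Finset.range (m+1)).filter (fun k => Even k),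
      ((m+1).choose (k+1) : ℂ) * (-1)^(k/2) * y^(m-k)) * (2*I)
    = (y+I)^(m+1) - (y-I)^(m+1) := by
  rw [add_pow, sub_eq_add_neg y I, add_pow, ← Finset.sum_sub_distrib, Finset.sum_mul]
  set g : ℕ → ℂ := fun j => y^j * I^(m+1-j) * ((m+1).choose j) - y^j * (-I)^(m+1-j) * ((m+1).choose j) with hg
  have hvanish : ∀ j ∈ Finset.range (m+2), g j ≠ 0 → ¬ Even (m+1-j) := by
    intro j _ hne he
    apply hne
    obtain ⟨t, ht⟩ := he
    simp only [hg, ht]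
    rw [show t + t = 2*t by ring, pow_mul, pow_mul, neg_sq]
    ring
  rw [← Finset.sum_filter_of_ne hvanish]
  refine Finset.sum_nbij' (fun k => m - k) (fun j => m - j) ?_ ?_ ?_ ?_ ?_
  · intro k hk
    simp only [Finset.mem_filter, Finset.mem_range] at hk ⊢
    obtain ⟨hk1, hk2⟩ := hk
    refine ⟨by omega, ?_⟩
    rw [show m + 1 - (m - k) = k + 1 by omega]
    simpa [Nat.odd_add_one] using hk2
  · intro j hj
    simp only [Finset.mem_filter, Finset.mem_range] at hj ⊢
    obtain ⟨hj1, hj2⟩ := hj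
    have hjm : j ≤ m := by
      by_contra h
      have hje : j = m + 1 := by omega
      subst hje
      simp at hj2
    refine ⟨by omega, ?_⟩
    have hrw : m + 1 - j = (m - j) + 1 := by omega
    rw [hrw] at hj2
    simpa [Nat.even_add_one] using hj2
  · intro k hk
    simp only [Finset.mem_filter, Finset.mem_range] at hk
    show m - (m - k) = k
    omega
  · intro j hj
    simp only [Finset.mem_filter, Finset.mem_range] at hj
    obtain ⟨hj1, hj2⟩ := hj
    have hjm : j ≤ m := by
      by_contra h
      have hje : j = m + 1 := by omega
      subst hje
      simp at hj2
    show m - (m - j) = j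
    omega
  · intro k hk
    simp only [Finset.mem_filter, Finset.mem_range] at hk
    obtain ⟨hk1, hk2⟩ := hk
    have hkm : k ≤ m := by omega
    obtain ⟨t, ht⟩ := hk2
    have hk2t : k = 2*t := by omega
    subst hk2t
    simp only [hg]
    rw [show m + 1 - (m - 2*t) = 2*t + 1 by omega,
        show (m+1).choose (m-2*t) = (m+1).choose (2*t+1) by
          rw [show m - 2*t = (m+1) - (2*t+1) by omega]
          exact Nat.choose_symm (by omega),
        show 2*t/2 = t by omega]
    rw [Ipow1, Ipow2]
    ring

lemma qGc (m : ℕ) (x : ℝ) :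
    ((m.factorial * q m x / (1+x^2)^(m+1) : ℝ) : ℂ) = Gc m (x:ℂ) := by
  have hz : ∀ w : ℂ, w^(-(m+1:ℤ)) = (w^(m+1))⁻¹ := fun w => by
    rw [show (-(m+1:ℤ)) = -((m+1:ℕ):ℤ) by push_cast; ring, zpow_neg, zpow_natCast]
  have hk := key m (x:ℂ)
  have hmul : ((x:ℂ)+I)*((x:ℂ)-I) = ((1:ℂ)+(x:ℂ)^2) := by linear_combination (-1:ℂ) * I_sq
  have h1 : ((x:ℂ) - I) ≠ 0 := sub_I_ne x
  have h2 : ((x:ℂ) + I) ≠ 0 := add_I_ne x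
  have h3 : ((1:ℂ)+(x:ℂ)^2) ≠ 0 := by rw [← hmul]; exact mul_ne_zero h2 h1
  have hmp : ((x:ℂ)+I)^(m+1) * ((x:ℂ)-I)^(m+1) = ((1:ℂ)+(x:ℂ)^2)^(m+1) := by
    rw [← mul_pow, hmul]
  unfold Gc q
  rw [hz, hz]
  push_cast
  rw [inv_sub_inv (pow_ne_zero _ h1) (pow_ne_zero _ h2), ← hk, mul_comm (((x:ℂ)-I)^(m+1)), hmp]
  field_simp

lemma derivA (m : ℕ) (x : ℝ) :
    iteratedDeriv m (fun x : ℝ => 1/(1+x^2)) x = m.factorial * q m x / (1+x^2)^(m+1) := by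
  induction m generalizing x with
  | zero =>
    rw [iteratedDeriv_zero]
    norm_num [q, Finset.filter_singleton]
  | succ m ih =>
    have hfun : iteratedDeriv m (fun x : ℝ => 1/(1+x^2)) = fun y : ℝ => (Gc m (y:ℂ)).re := by
      funext y
      rw [ih y, ← Complex.ofReal_re ((m.factorial * q m y / (1+y^2)^(m+1) : ℝ)), qGc m y]
    rw [iteratedDeriv_succ, hfun]
    have hd : HasDerivAt (fun y : ℝ => (Gc m (y:ℂ)).re) ((Gc (m+1) (x:ℂ)).re) x :=
      (Gc_hasDerivAt m x).real_of_complex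
    rw [hd.deriv, ← qGc (m+1) x, Complex.ofReal_re]

theorem arctan_iteratedDeriv (n : ℕ) (hn : 1 ≤ n) (x : ℝ) :
    iteratedDeriv n Real.arctan x = (n - 1).factorial * q (n - 1) x / (1 + x^2)^n := by
  obtain ⟨m, rfl⟩ : ∃ m, n = m + 1 := ⟨n - 1, (Nat.succ_pred_eq_of_pos hn).symm⟩
  rw [iteratedDeriv_succ', Real.deriv_arctan]
  simpa using derivA m x
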